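/- In the setting of the recursion $\widehat{m}_{t+1} = (1 - \frac{c_1/(t+1)^{\delta_1}}{m_t + c_3}) m_t + c_2/(t+1)^{\delta_2}$, $m_{t+1} = \max(|\widehat{m}_{t+1}|, |m_t|)$ with $m_0 \geq 0$, $c_1, c_2, c_3 > 0$, $0 < \delta_1 < \delta_2 < 1$: the sequence $(m_t)$ is eventually constant; i.e., there exists a finite $T$ such that $m_t = m_T$ for all $t \geq T$. -/

import Mathlib

open Filter

/-- The sequence `m_t` of the supBounded recursion is eventually constant. -/
theorem supEventuallyConstant
    (c1 c2 c3 δ1 δ2 : ℝ) (hc1 : 0 < c1) (hc2 : 0 < c2) (hc3 : 0 < c3)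
    (hδ1 : 0 < δ1) (hδ12 : δ1 < δ2) (hδ2 : δ2 < 1)
    (m mhat : ℕ → ℝ) (hm0 : 0 ≤ m 0)
    (hmhat : ∀ t : ℕ, mhat (t + 1) =
      (1 - (c1 / ((t : ℝ) + 1) ^ δ1) / (m t + c3)) * m t + c2 / ((t : ℝ) + 1) ^ δ2)
    (hm : ∀ t : ℕ, m (t + 1) = max |mhat (t + 1)| |m t|) :
    ∃ T : ℕ, ∀ t : ℕ, T ≤ t → m t = m T := by
  have hpos : ∀ t, 0 ≤ m t := by
    intro t
    cases t with
    | zero => exact hm0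
    | succ n => rw [hm n]; exact le_trans (abs_nonneg _) (le_max_right _ _)
  have hstep : ∀ t : ℕ, m t ≤ m (t + 1) := by
    intro t
    rw [hm t]
    exact le_trans (le_abs_self _) (le_max_right _ _)
  have hmono : ∀ s t : ℕ, s ≤ t → m s ≤ m t := by
    intro s t hst
    induction t with
    | zero => have : s = 0 := Nat.le_zero.mp hst; simp [this]
    | succ n ih =>
      rcases Nat.lt_or_ge s (n + 1) with h | h
      · exact le_trans (ih (Nat.lt_succ_iff.mp h)) (hstep n)
      · have : s = n + 1 := le_antisymm hst h
        simp [this]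
  have hb : 0 < m 1 := by
    rcases eq_or_lt_of_le hm0 with h0 | h0
    · have h1 : mhat 1 = c2 := by
        have := hmhat 0
        simp only [Nat.cast_zero, zero_add, Real.one_rpow, ← h0] at this
        simpa using this
      have := hm 0
      rw [h1, ← h0] at this
      rw [this]
      exact lt_of_lt_of_le (abs_pos.mpr hc2.ne') (le_max_left _ _)
    · exact lt_of_lt_of_le h0 (hstep 0)
  set b := m 1 with hbdef
  have hblow : ∀ t : ℕ, 1 ≤ t → b ≤ m t := fun t ht => hmono 1 t ht
  -- eventual conditions
  have htend : Tendsto (fun t : ℕ => ((t : ℝ) + 1)) atTop atTop :=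
    tendsto_atTop_add_const_right _ 1 tendsto_natCast_atTop_atTop
  have h1 : Tendsto (fun t : ℕ => ((t : ℝ) + 1) ^ δ1) atTop atTop :=
    (tendsto_rpow_atTop hδ1).comp htend
  have h2 : Tendsto (fun t : ℕ => ((t : ℝ) + 1) ^ (δ2 - δ1)) atTop atTop :=
    (tendsto_rpow_atTop (by linarith)).comp htend
  have hev : ∀ᶠ t : ℕ in atTop,
      (c1 / c3 ≤ ((t : ℝ) + 1) ^ δ1 ∧ c2 * (b + c3) / (c1 * b) ≤ ((t : ℝ) + 1) ^ (δ2 - δ1))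
      ∧ 1 ≤ t :=
    ((h1.eventually_ge_atTop _).and (h2.eventually_ge_atTop _)).and (eventually_ge_atTop 1)
  obtain ⟨T, hT⟩ := eventually_atTop.mp hev
  refine ⟨T, ?_⟩
  have hconst : ∀ t : ℕ, T ≤ t → m (t + 1) = m t := by
    intro t ht
    obtain ⟨⟨hP, hQ⟩, ht1⟩ := hT t ht
    set x := m t with hxdef
    have hbx : b ≤ x := hblow t ht1
    have hx0 : 0 ≤ x := hpos t
    have hx3 : (0:ℝ) < x + c3 := by linarith
    have hA : (0:ℝ) < ((t : ℝ) + 1) ^ δ1 := Real.rpow_pos_of_pos (by positivity) _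
    have hB : (0:ℝ) < ((t : ℝ) + 1) ^ δ2 := Real.rpow_pos_of_pos (by positivity) _
    have hC : (0:ℝ) < ((t : ℝ) + 1) ^ (δ2 - δ1) := Real.rpow_pos_of_pos (by positivity) _
    set A := ((t : ℝ) + 1) ^ δ1
    set B := ((t : ℝ) + 1) ^ δ2
    set C := ((t : ℝ) + 1) ^ (δ2 - δ1)
    have hAB : B = A * C := by
      rw [← Real.rpow_add (by positivity)]
      rw [add_sub_cancel]
    -- coefficient ≤ 1
    have hcoef : (c1 / A) / (x + c3) ≤ 1 := by
      rw [div_le_one hx3, div_le_iff₀ hA]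
      have : c1 ≤ c3 * A := by
        rw [div_le_iff₀ hc3] at hP
        linarith [hP]
      nlinarith
    have hnn : 0 ≤ mhat (t + 1) := by
      rw [hmhat t]
      have h1 : 0 ≤ (1 - (c1 / A) / (x + c3)) * x := mul_nonneg (by linarith) hx0
      have h2 : 0 ≤ c2 / B := le_of_lt (div_pos hc2 hB)
      linarith
    have hub : mhat (t + 1) ≤ x := by
      rw [hmhat t]
      have hkey : c2 * (x + c3) ≤ c1 * x * C := by
        have hQ' : c2 * (b + c3) ≤ c1 * b * C := by
          rw [div_le_iff₀ (by positivity)] at hQ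
          nlinarith
        nlinarith [mul_le_mul_of_nonneg_left hbx (le_of_lt hc2),
          mul_le_mul_of_nonneg_right hbx (le_of_lt (mul_pos hc1 hC))]
      have h3 : c2 / B ≤ (c1 / A) / (x + c3) * x := by
        rw [hAB, div_div, div_mul_eq_mul_div,
          div_le_div_iff₀ (mul_pos hA hC) (mul_pos hA hx3)]
        nlinarith [mul_le_mul_of_nonneg_left hkey (le_of_lt hA)]
      nlinarith
    have habs : |mhat (t + 1)| ≤ |x| := by
      rw [abs_of_nonneg hnn, abs_of_nonneg hx0]
      exact hub
    rw [hm t, max_eq_right habs, abs_of_nonneg hx0]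
  intro t ht
  induction t with
  | zero => have : T = 0 := Nat.le_zero.mp ht; rw [this]
  | succ n ih =>
    rcases Nat.lt_or_ge T (n + 1) with h | h
    · have hn : T ≤ n := Nat.lt_succ_iff.mp h
      rw [hconst n hn, ih hn]
    · have : T = n + 1 := le_antisymm ht h
      rw [this]
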